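/- Let s ∈ ℂ with sinh s ≠ 0, let a, b ∈ ℂ, and define u : ℝ → ℂ by u(x) = a·e^{sx} + b·e^{−sx} and v : ℝ → ℂ by v(x) = u′(x)/s. Then (1/sinh s)·[[cosh s, −1], [−1, cosh s]] · [u(0), u(1)]ᵀ = [−v(0), v(1)]ᵀ. -/

import Mathlib

lemma aux_deriv (s a b : ℂ) (x : ℝ) :
    HasDerivAt (fun x : ℝ => a * Complex.exp (s * x) + b * Complex.exp (-s * x))
      (s * (a * Complex.exp (s * x) - b * Complex.exp (-s * x))) x := by
  have h1 : HasDerivAt (fun z : ℂ => a * Complex.exp (s * z) + b * Complex.exp (-s * z))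
      (a * (Complex.exp (s * x) * s) + b * (Complex.exp (-s * x) * (-s))) (x : ℂ) := by
    have e1 : HasDerivAt (fun z : ℂ => Complex.exp (s * z)) (Complex.exp (s * (x:ℂ)) * s) x :=
      (Complex.hasDerivAt_exp _).comp _ (by simpa using (hasDerivAt_id (x:ℂ)).const_mul s)
    have e2 : HasDerivAt (fun z : ℂ => Complex.exp (-s * z)) (Complex.exp (-s * (x:ℂ)) * (-s)) x := by
      have := (Complex.hasDerivAt_exp (-s * (x:ℂ))).comp (x:ℂ)
        (by simpa using (hasDerivAt_id (x:ℂ)).const_mul (-s) :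
          HasDerivAt (fun z : ℂ => -s * z) (-s) (x:ℂ))
      exact this
    exact (e1.const_mul a).add (e2.const_mul b)
  have := h1.comp_ofReal
  convert this using 1
  ring

open Matrix

/-- For `u(x) = a·e^{sx} + b·e^{-sx}` and `v = u'/s`, the two-sided DtN matrix
`(1/sinh s)·[[cosh s, -1], [-1, cosh s]]` maps the Dirichlet data `(u(0), u(1))`
to the Neumann data `(-v(0), v(1))`. -/
theorem continuum_DtN_map (s : ℂ) (hs : Complex.sinh s ≠ 0) (a b : ℂ)
    (u v : ℝ → ℂ)
    (hu : ∀ x : ℝ, u x = a * Complex.exp (s * x) + b * Complex.exp (-s * x))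
    (hv : ∀ x : ℝ, v x = deriv u x / s) :
    ((1 / Complex.sinh s) • !![Complex.cosh s, -1; -1, Complex.cosh s]) *ᵥ ![u 0, u 1]
      = ![-v 0, v 1] := by
  have hs0 : s ≠ 0 := by rintro rfl; simp at hs
  have hue : u = fun x : ℝ => a * Complex.exp (s * x) + b * Complex.exp (-s * x) :=
    funext hu
  have hd : ∀ x : ℝ, deriv u x = s * (a * Complex.exp (s * x) - b * Complex.exp (-s * x)) := by
    intro x
    rw [hue]
    exact (aux_deriv s a b x).deriv
  have hv0 : v 0 = a - b := by
    rw [hv 0, hd 0]; push_cast; field_simp; simp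
  have hv1 : v 1 = a * Complex.exp s - b * Complex.exp (-s) := by
    rw [hv 1, hd 1]; push_cast; rw [mul_one, mul_one]; field_simp
  have hu0 : u 0 = a + b := by rw [hu 0]; push_cast; simp
  have hu1 : u 1 = a * Complex.exp s + b * Complex.exp (-s) := by
    rw [hu 1]; push_cast; simp
  have hes : Complex.exp s = Complex.cosh s + Complex.sinh s := (Complex.cosh_add_sinh s).symm
  have hens : Complex.exp (-s) = Complex.cosh s - Complex.sinh s := (Complex.cosh_sub_sinh s).symm
  funext i
  fin_cases i
  · simp [Matrix.mulVec, dotProduct, Fin.sum_univ_succ, hu0, hu1, hv0, hv1]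
    field_simp
    rw [hes, hens]
    ring
  · simp [Matrix.mulVec, dotProduct, Fin.sum_univ_succ, hu0, hu1, hv0, hv1]
    field_simp
    rw [hes, hens]
    linear_combination (a + b) * Complex.cosh_sq_sub_sinh_sq s
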